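/- Let R_1, …, R_K be real symmetric positive definite d×d matrices, let R = Σ_{k=1}^K R_k, let W_1, …, W_K be d×q real matrices, let Ŵ be any d×q real matrix, and define W_A = R^{-1} (Σ_{k=1}^K R_k W_k). Then ‖W_A − Ŵ‖ ≤ S_2 · max_{1≤k≤K} ‖W_k − Ŵ‖, where S_2 = max_k λmax(R_k) / min_k λmin(R_k). -/

import Mathlib

open Matrix BigOperators

/-- The spectral norm (ℓ²→ℓ² operator norm) of a real matrix. -/
noncomputable def specNorm {m n : ℕ} (A : Matrix (Fin m) (Fin n) ℝ) : ℝ :=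
  ‖LinearMap.toContinuousLinearMap (Matrix.toEuclideanLin A)‖

/-- The largest (real) eigenvalue of a real matrix, as the supremum of its real spectrum. -/
noncomputable def lambdaMax {d : ℕ} (A : Matrix (Fin d) (Fin d) ℝ) : ℝ :=
  sSup (spectrum ℝ A)

/-- The smallest (real) eigenvalue of a real matrix, as the infimum of its real spectrum. -/
noncomputable def lambdaMin {d : ℕ} (A : Matrix (Fin d) (Fin d) ℝ) : ℝ :=
  sInf (spectrum ℝ A)

open scoped Matrix.Norms.L2Operator Pointwise

section AggHelpers
variable {d : ℕ}

lemma specNorm_eq {m n : ℕ} (A : Matrix (Fin m) (Fin n) ℝ) : specNorm A = ‖A‖ := rfl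

lemma spec_eq {A : Matrix (Fin d) (Fin d) ℝ} (hA : A.IsHermitian) :
    spectrum ℝ A = Set.range hA.eigenvalues :=
  hA.spectrum_real_eq_range_eigenvalues

lemma spec_bddAbove {A : Matrix (Fin d) (Fin d) ℝ} (hA : A.IsHermitian) :
    BddAbove (spectrum ℝ A) := by
  rw [spec_eq hA]; exact (Set.finite_range _).bddAbove

lemma spec_bddBelow {A : Matrix (Fin d) (Fin d) ℝ} (hA : A.IsHermitian) :
    BddBelow (spectrum ℝ A) := by
  rw [spec_eq hA]; exact (Set.finite_range _).bddBelow

lemma eig_le_lambdaMax {A : Matrix (Fin d) (Fin d) ℝ} (hA : A.IsHermitian) (i : Fin d) :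
    hA.eigenvalues i ≤ lambdaMax A :=
  le_csSup (spec_bddAbove hA) (hA.eigenvalues_mem_spectrum_real i)

lemma lambdaMin_le_of_mem {A : Matrix (Fin d) (Fin d) ℝ} (hA : A.IsHermitian)
    {μ : ℝ} (h : μ ∈ spectrum ℝ A) : lambdaMin A ≤ μ :=
  csInf_le (spec_bddBelow hA) h

lemma lambdaMin_mem [Nonempty (Fin d)] {A : Matrix (Fin d) (Fin d) ℝ} (hA : A.IsHermitian) :
    lambdaMin A ∈ spectrum ℝ A := by
  rw [lambdaMin, spec_eq hA]
  exact (Set.range_nonempty _).csInf_mem (Set.finite_range _)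

lemma lambdaMin_pos [Nonempty (Fin d)] {A : Matrix (Fin d) (Fin d) ℝ} (hA : A.PosDef) :
    0 < lambdaMin A := by
  have h := lambdaMin_mem hA.1
  rw [spec_eq hA.1] at h
  obtain ⟨i, hi⟩ := h
  rw [← hi]
  exact hA.eigenvalues_pos i

lemma lambdaMax_pos [Nonempty (Fin d)] {A : Matrix (Fin d) (Fin d) ℝ} (hA : A.PosDef) :
    0 < lambdaMax A := by
  obtain ⟨i⟩ := (inferInstance : Nonempty (Fin d))
  exact lt_of_lt_of_le (hA.eigenvalues_pos i) (eig_le_lambdaMax hA.1 i)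

lemma rayleigh_lower {A : Matrix (Fin d) (Fin d) ℝ} (hA : A.IsHermitian) (v : Fin d → ℝ) :
    lambdaMin A * (v ⬝ᵥ v) ≤ v ⬝ᵥ (A *ᵥ v) := by
  set c := lambdaMin A with hc
  have hherm : (A - c • 1).IsHermitian := by
    unfold Matrix.IsHermitian
    rw [conjTranspose_sub, conjTranspose_smul, conjTranspose_one, hA.eq]
    norm_num
  have hspec : spectrum ℝ (A - c • 1) = spectrum ℝ A - ({c} : Set ℝ) := by
    have h1 : (c • (1 : Matrix (Fin d) (Fin d) ℝ)) = algebraMap ℝ _ c :=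
      (Algebra.algebraMap_eq_smul_one c).symm
    rw [h1, ← spectrum.sub_singleton_eq]
  have hnn : ∀ i, 0 ≤ hherm.eigenvalues i := by
    intro i
    have hmem := hherm.eigenvalues_mem_spectrum_real i
    rw [hspec] at hmem
    obtain ⟨x, hx, y, hy, hxy⟩ := Set.mem_sub.mp hmem
    rw [Set.mem_singleton_iff] at hy
    subst hy
    have := csInf_le (spec_bddBelow hA) hx
    rw [← hxy]
    have hcc : c = sInf (spectrum ℝ A) := rfl
    linarith
  have hpsd := hherm.posSemidef_iff_eigenvalues_nonneg.mpr (fun i => hnn i)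
  have h2 := hpsd.dotProduct_mulVec_nonneg v
  simp only [star_trivial, sub_mulVec, smul_mulVec, one_mulVec, dotProduct_sub,
    dotProduct_smul, smul_eq_mul] at h2
  linarith

lemma sum_mulVec' {K : ℕ} (R : Fin K → Matrix (Fin d) (Fin d) ℝ) (x : Fin d → ℝ) :
    (∑ k, R k) *ᵥ x = ∑ k, (R k *ᵥ x) :=
  map_sum (AddMonoidHom.mk' (fun M : Matrix (Fin d) (Fin d) ℝ => M *ᵥ x)
    (fun A B => Matrix.add_mulVec A B x)) R Finset.univ

lemma dotProduct_sum' {K : ℕ} (y : Fin d → ℝ) (v : Fin K → (Fin d → ℝ)) :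
    y ⬝ᵥ (∑ k, v k) = ∑ k, y ⬝ᵥ v k :=
  map_sum (AddMonoidHom.mk' (fun w : Fin d → ℝ => y ⬝ᵥ w)
    (fun a b => dotProduct_add y a b)) v Finset.univ

lemma posDef_sum {K : ℕ} [Nonempty (Fin K)] (R : Fin K → Matrix (Fin d) (Fin d) ℝ)
    (hpd : ∀ k, (R k).PosDef) : (∑ k, R k).PosDef := by
  refine Matrix.PosDef.of_dotProduct_mulVec_pos ?_ ?_
  · unfold Matrix.IsHermitian
    rw [conjTranspose_sum]
    exact Finset.sum_congr rfl fun k _ => (hpd k).1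
  · intro x hx
    rw [sum_mulVec', dotProduct_sum']
    exact Finset.sum_pos (fun k _ => (hpd k).dotProduct_mulVec_pos hx) Finset.univ_nonempty

lemma mem_spectrum_of_mulVec {M : Matrix (Fin d) (Fin d) ℝ} {v : Fin d → ℝ} (hv : v ≠ 0)
    {t : ℝ} (h : M *ᵥ v = t • v) : t ∈ spectrum ℝ M := by
  rw [← Matrix.spectrum_toEuclideanLin]
  have heig : Module.End.HasEigenvalue (Matrix.toEuclideanLin M) t := by
    apply Module.End.hasEigenvalue_of_hasEigenvector (x := WithLp.toLp 2 v)
    constructor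
    · rw [Module.End.mem_eigenspace_iff, Matrix.toEuclideanLin_apply_piLp_toLp, h]
      simp
    · simpa using hv
  exact heig.mem_spectrum

lemma norm_diagonal_le (v : Fin d → ℝ) {c : ℝ} (hc : 0 ≤ c) (h : ∀ i, |v i| ≤ c) :
    ‖(Matrix.diagonal v : Matrix (Fin d) (Fin d) ℝ)‖ ≤ c := by
  rw [Matrix.l2_opNorm_def]
  apply ContinuousLinearMap.opNorm_le_bound _ hc
  intro x
  simp only [LinearEquiv.trans_apply, LinearMap.coe_toContinuousLinearMap']
  rw [EuclideanSpace.norm_eq, EuclideanSpace.norm_eq]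
  have hle : ∀ i : Fin d, ‖Matrix.toEuclideanLin (Matrix.diagonal v) x i‖ ^ 2
      ≤ c ^ 2 * ‖x i‖ ^ 2 := by
    intro i
    have h1 : Matrix.toEuclideanLin (Matrix.diagonal v) x i = v i * x i := by
      rw [Matrix.toEuclideanLin_apply]
      exact Matrix.mulVec_diagonal v _ i
    rw [h1, Real.norm_eq_abs, Real.norm_eq_abs, abs_mul, mul_pow]
    exact mul_le_mul_of_nonneg_right (pow_le_pow_left₀ (abs_nonneg _) (h i) 2) (by positivity)
  calc Real.sqrt (∑ i, ‖Matrix.toEuclideanLin (Matrix.diagonal v) x i‖ ^ 2)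
      ≤ Real.sqrt (∑ i, c ^ 2 * ‖x i‖ ^ 2) :=
        Real.sqrt_le_sqrt (Finset.sum_le_sum fun i _ => hle i)
    _ = c * Real.sqrt (∑ i, ‖x i‖ ^ 2) := by
        rw [← Finset.mul_sum, Real.sqrt_mul (by positivity), Real.sqrt_sq hc]

lemma norm_herm_le {A : Matrix (Fin d) (Fin d) ℝ} (hA : A.IsHermitian) {c : ℝ} (hc : 0 ≤ c)
    (h : ∀ i, |hA.eigenvalues i| ≤ c) : ‖A‖ ≤ c := by
  conv_lhs => rw [hA.spectral_theorem]
  rw [Unitary.conjStarAlgAut_apply, CStarRing.norm_mul_mem_unitary _ (Unitary.star_mem (hA.eigenvectorUnitary).2),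
    CStarRing.norm_coe_unitary_mul]
  apply norm_diagonal_le _ hc
  intro i
  simpa using h i

lemma norm_posDef_le [Nonempty (Fin d)] {A : Matrix (Fin d) (Fin d) ℝ} (hA : A.PosDef) :
    ‖A‖ ≤ lambdaMax A := by
  apply norm_herm_le hA.1 (lambdaMax_pos hA).le
  intro i
  rw [abs_of_pos (hA.eigenvalues_pos i)]
  exact eig_le_lambdaMax hA.1 i

lemma basis_dot_one [Nonempty (Fin d)] {A : Matrix (Fin d) (Fin d) ℝ} (hA : A.IsHermitian)
    (i : Fin d) : (⇑(hA.eigenvectorBasis i) : Fin d → ℝ) ⬝ᵥ ⇑(hA.eigenvectorBasis i) = 1 := by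
  have hn : ‖hA.eigenvectorBasis i‖ = 1 := hA.eigenvectorBasis.orthonormal.1 i
  rw [EuclideanSpace.norm_eq] at hn
  have h2 : ∑ j, ‖hA.eigenvectorBasis i j‖ ^ 2 = 1 := by
    have h3 := congrArg (· ^ 2) hn
    simp only [one_pow] at h3
    rwa [Real.sq_sqrt (by positivity : (0:ℝ) ≤ ∑ j, ‖hA.eigenvectorBasis i j‖ ^ 2)] at h3
  rw [show (⇑(hA.eigenvectorBasis i) : Fin d → ℝ) ⬝ᵥ ⇑(hA.eigenvectorBasis i)
      = ∑ j, ‖hA.eigenvectorBasis i j‖ ^ 2 from by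
    simp [dotProduct, Real.norm_eq_abs, sq_abs, sq]]
  exact h2

lemma basis_ne_zero [Nonempty (Fin d)] {A : Matrix (Fin d) (Fin d) ℝ} (hA : A.IsHermitian)
    (i : Fin d) : (⇑(hA.eigenvectorBasis i) : Fin d → ℝ) ≠ 0 := by
  intro h0
  have h1 : (⇑(hA.eigenvectorBasis i) : Fin d → ℝ) ⬝ᵥ ⇑(hA.eigenvectorBasis i) = 1 :=
    basis_dot_one hA i
  rw [h0] at h1
  simp at h1

lemma norm_inv_posDef_le [Nonempty (Fin d)] {A : Matrix (Fin d) (Fin d) ℝ} (hA : A.PosDef) :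
    ‖A⁻¹‖ ≤ (lambdaMin A)⁻¹ := by
  have hmin := lambdaMin_pos hA
  have hAinv : (A⁻¹).PosDef := hA.inv
  have hdet : IsUnit A.det := isUnit_iff_ne_zero.2 hA.det_pos.ne'
  apply norm_herm_le hAinv.1 (by positivity)
  intro i
  have hμ := hAinv.eigenvalues_pos i
  rw [abs_of_pos hμ]
  set μ := hAinv.1.eigenvalues i with hμdef
  set b : Fin d → ℝ := ⇑(hAinv.1.eigenvectorBasis i) with hb
  have hb0 : b ≠ 0 := basis_ne_zero hAinv.1 i
  have heig : A⁻¹ *ᵥ b = μ • b := hAinv.1.mulVec_eigenvectorBasis i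
  have hAb : A *ᵥ b = μ⁻¹ • b := by
    have h1 : A *ᵥ (A⁻¹ *ᵥ b) = b := by
      rw [Matrix.mulVec_mulVec, Matrix.mul_nonsing_inv _ hdet, Matrix.one_mulVec]
    rw [heig, Matrix.mulVec_smul] at h1
    have h2 := congrArg (fun y => μ⁻¹ • y) h1
    simp only [smul_smul, inv_mul_cancel₀ hμ.ne', one_smul] at h2
    exact h2
  have hmem : μ⁻¹ ∈ spectrum ℝ A := mem_spectrum_of_mulVec hb0 hAb
  have hle := lambdaMin_le_of_mem hA.1 hmem
  calc μ = (μ⁻¹)⁻¹ := (inv_inv μ).symm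
    _ ≤ (lambdaMin A)⁻¹ := by gcongr

lemma lambdaMin_sum_ge [Nonempty (Fin d)] {K : ℕ} [Nonempty (Fin K)]
    (R : Fin K → Matrix (Fin d) (Fin d) ℝ) (hpd : ∀ k, (R k).PosDef) :
    ∑ k, lambdaMin (R k) ≤ lambdaMin (∑ k, R k) := by
  have hM := posDef_sum R hpd
  have hmem := lambdaMin_mem hM.1
  rw [spec_eq hM.1] at hmem
  obtain ⟨i, hi⟩ := hmem
  set b : Fin d → ℝ := ⇑(hM.1.eigenvectorBasis i) with hb
  have hbv : (∑ k, R k) *ᵥ b = hM.1.eigenvalues i • b := hM.1.mulVec_eigenvectorBasis i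
  have hb1 : b ⬝ᵥ b = 1 := basis_dot_one hM.1 i
  have key : ∀ k, lambdaMin (R k) ≤ b ⬝ᵥ (R k *ᵥ b) := by
    intro k
    have := rayleigh_lower (hpd k).1 b
    rwa [hb1, mul_one] at this
  calc ∑ k, lambdaMin (R k) ≤ ∑ k, b ⬝ᵥ (R k *ᵥ b) := Finset.sum_le_sum fun k _ => key k
    _ = b ⬝ᵥ ((∑ k, R k) *ᵥ b) := by rw [sum_mulVec', dotProduct_sum']
    _ = lambdaMin (∑ k, R k) := by
        rw [hbv, dotProduct_smul, smul_eq_mul, hb1, mul_one, hi]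

end AggHelpers

theorem adml_aggregation_bound_posdef {d q K : ℕ} (hK : 1 ≤ K)
    (R : Fin K → Matrix (Fin d) (Fin d) ℝ)
    (hpd : ∀ k, (R k).PosDef)
    (W : Fin K → Matrix (Fin d) (Fin q) ℝ)
    (What : Matrix (Fin d) (Fin q) ℝ)
    (WA : Matrix (Fin d) (Fin q) ℝ)
    (hWA : WA = (∑ k, R k)⁻¹ * (∑ k, R k * W k))
    (S2 : ℝ)
    (hS2 : S2 = (⨆ k, lambdaMax (R k)) / ⨅ k, lambdaMin (R k)) :
    specNorm (WA - What) ≤ S2 * ⨆ k, specNorm (W k - What) := by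
  haveI : Nonempty (Fin K) := ⟨⟨0, hK⟩⟩
  rcases Nat.eq_zero_or_pos d with hd | hd
  · subst hd
    have h0 : ∀ (B : Matrix (Fin 0) (Fin q) ℝ), specNorm B = 0 := by
      intro B
      have hB : B = 0 := by
        ext i j
        exact absurd i.2 (Nat.not_lt_zero _)
      rw [hB, specNorm_eq, norm_zero]
    rw [h0]
    have hsup : (⨆ k, specNorm (W k - What)) = 0 := by
      simp only [h0]
      exact ciSup_const
    rw [hsup, mul_zero]
  · haveI : Nonempty (Fin d) := ⟨⟨0, hd⟩⟩
    set M := ∑ k, R k with hMdef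
    have hM : M.PosDef := posDef_sum R hpd
    have hdet : IsUnit M.det := isUnit_iff_ne_zero.2 hM.det_pos.ne'
    set m := ⨅ k, lambdaMin (R k) with hmdef
    set Mx := ⨆ k, lambdaMax (R k) with hMxdef
    set MD := ⨆ k, specNorm (W k - What) with hMDdef
    have hm_le : ∀ k, m ≤ lambdaMin (R k) := fun k => by
      rw [hmdef]
      exact ciInf_le (Set.finite_range fun j => lambdaMin (R j)).bddBelow k
    have hMx_ge : ∀ k, lambdaMax (R k) ≤ Mx := fun k => by
      rw [hMxdef]
      exact le_ciSup (Set.finite_range fun j => lambdaMax (R j)).bddAbove k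
    have hMD_ge : ∀ k, specNorm (W k - What) ≤ MD := fun k => by
      rw [hMDdef]
      exact le_ciSup (Set.finite_range fun j => specNorm (W j - What)).bddAbove k
    have hm_pos : 0 < m := by
      obtain ⟨k, hk⟩ := exists_eq_ciInf_of_finite (f := fun k => lambdaMin (R k))
      rw [hmdef, ← hk]
      exact lambdaMin_pos (hpd k)
    have hMx_pos : 0 < Mx := lt_of_lt_of_le (lambdaMax_pos (hpd (Classical.arbitrary _)))
      (hMx_ge _)
    have hMD_nonneg : 0 ≤ MD := le_trans (by rw [specNorm_eq]; exact norm_nonneg _)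
      (hMD_ge (Classical.arbitrary _))
    have hKpos : (0:ℝ) < K := by exact_mod_cast hK
    -- rewrite WA - What
    have key : WA - What = M⁻¹ * (∑ k, R k * (W k - What)) := by
      rw [hWA]
      have h1 : (∑ k, R k * (W k - What)) = (∑ k, R k * W k) - M * What := by
        rw [hMdef, Matrix.sum_mul]
        simp only [Matrix.mul_sub]
        rw [Finset.sum_sub_distrib]
      rw [h1, Matrix.mul_sub, ← Matrix.mul_assoc, Matrix.nonsing_inv_mul _ hdet, Matrix.one_mul]
    -- λmin of M bound
    have hlmM : (K : ℝ) * m ≤ lambdaMin M := by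
      calc (K : ℝ) * m = ∑ _k : Fin K, m := by
            rw [Finset.sum_const, Finset.card_univ, Fintype.card_fin, nsmul_eq_mul]
        _ ≤ ∑ k, lambdaMin (R k) := Finset.sum_le_sum fun k _ => hm_le k
        _ ≤ lambdaMin M := lambdaMin_sum_ge R hpd
    have hMinv : ‖M⁻¹‖ ≤ ((K:ℝ) * m)⁻¹ := by
      calc ‖M⁻¹‖ ≤ (lambdaMin M)⁻¹ := norm_inv_posDef_le hM
        _ ≤ ((K:ℝ) * m)⁻¹ := inv_anti₀ (by positivity) hlmM
    -- norm chain
    rw [specNorm_eq, key]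
    simp only [specNorm_eq] at hMD_ge hMDdef
    calc ‖M⁻¹ * (∑ k, R k * (W k - What))‖
        ≤ ‖M⁻¹‖ * ‖∑ k, R k * (W k - What)‖ := Matrix.l2_opNorm_mul _ _
      _ ≤ ((K:ℝ) * m)⁻¹ * ((K:ℝ) * (Mx * MD)) := by
          apply mul_le_mul hMinv _ (norm_nonneg _) (by positivity)
          calc ‖∑ k, R k * (W k - What)‖ ≤ ∑ k, ‖R k * (W k - What)‖ :=
                norm_sum_le _ _
            _ ≤ ∑ _k : Fin K, Mx * MD := by
                apply Finset.sum_le_sum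
                intro k _
                calc ‖R k * (W k - What)‖ ≤ ‖R k‖ * ‖W k - What‖ := Matrix.l2_opNorm_mul _ _
                  _ ≤ Mx * MD := by
                      apply mul_le_mul _ (hMD_ge k) (norm_nonneg _) hMx_pos.le
                      exact le_trans (norm_posDef_le (hpd k)) (hMx_ge k)
            _ = (K:ℝ) * (Mx * MD) := by
                rw [Finset.sum_const, Finset.card_univ, Fintype.card_fin, nsmul_eq_mul]
      _ = (Mx / m) * MD := by
          field_simp
      _ = S2 * MD := by rw [hS2]
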